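/- The zeroth stationary probability satisfies β·(1 − π_0) = π_0·(h − H(u(β))) + ∑_{k=1}^{c−1} π_k (c−k) b_0 · u(β)^{k−1}·(1 − u(β)), where u(β) is the unique root of B_c(s) = β s in [0,1]; equivalently, β = π_0·[β + h − H(u(β)) + ∑_{k=1}^{c−1} (π_k/π_0)(c−k) b_0 u(β)^{k−1}(1 − u(β))] whenever π_0 > 0. -/

import Mathlib

open Set Filter Topology

/-- The generating function `B_i(s) = ∑_{j≥0} b_j s^j + (i-1) b_0 (1-s)`. -/
noncomputable def Bi (b : ℕ → ℝ) (i : ℕ) (s : ℝ) : ℝ :=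
  (∑' j : ℕ, b j * s ^ j) + ((i : ℝ) - 1) * b 0 * (1 - s)

/-- The generating function `H(s) = ∑_{j≥1} h_j s^j`. -/
noncomputable def Hgen (hh : ℕ → ℝ) (s : ℝ) : ℝ :=
  ∑' j : ℕ, hh (j + 1) * s ^ (j + 1)

private lemma aux_summable {p : ℕ → ℝ} (hp : Summable p) (hpnn : ∀ n, 0 ≤ p n)
    {u : ℝ} (hu0 : 0 ≤ u) (hu1 : u ≤ 1) (w : ℕ → ℝ) (C : ℝ)
    (hw : ∀ m, 0 ≤ w m) (hwC : ∀ m, w m ≤ C) :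
    Summable (fun m : ℕ => w m * (p (m + 1) * u ^ m)) := by
  have hps : Summable (fun m : ℕ => p (m + 1)) := (summable_nat_add_iff 1).2 hp
  refine Summable.of_nonneg_of_le
    (fun m => mul_nonneg (hw m) (mul_nonneg (hpnn _) (pow_nonneg hu0 _)))
    (fun m => ?_) (hps.mul_left C)
  calc w m * (p (m+1) * u ^ m) ≤ w m * (p (m+1) * 1) := by
        refine mul_le_mul_of_nonneg_left ?_ (hw m)
        exact mul_le_mul_of_nonneg_left (pow_le_one₀ hu0 hu1) (hpnn _)
    _ = w m * p (m+1) := by ring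
    _ ≤ C * p (m+1) := mul_le_mul_of_nonneg_right (hwC m) (hpnn _)

set_option maxHeartbeats 1000000 in
theorem stmt16 (c : ℕ) (hc : 1 ≤ c) (b : ℕ → ℝ)
    (hbnn : ∀ j : ℕ, j ≠ 1 → 0 ≤ b j) (hb0 : 0 < b 0)
    (hbsum : Summable b) (hbzero : (∑' j : ℕ, b j) = 0)
    (hb2 : 0 < ∑' j : ℕ, b (j + 2))
    (hh : ℕ → ℝ) (hhnn : ∀ j : ℕ, 0 ≤ hh (j + 1))
    (hhsum : Summable (fun j : ℕ => hh (j + 1)))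
    (hhpos : 0 < ∑' j : ℕ, hh (j + 1))
    (β : ℝ) (hβ : 0 < β)
    (π : ℕ → ℝ) (hπnn : ∀ n : ℕ, 0 ≤ π n) (hπsum : Summable π)
    (hπ1 : (∑' n : ℕ, π n) = 1)
    (heq0 : -((∑' j : ℕ, hh (j + 1)) + β) * π 0 + b 0 * π 1 + β = 0)
    (heqmid : ∀ n : ℕ, 1 ≤ n → n ≤ c - 1 →
      hh n * π 0 + (∑ k ∈ Finset.Icc 1 (n - 1), b (n - k + 1) * π k) +
        (b 1 - ((n : ℝ) - 1) * b 0 - β) * π n + ((n : ℝ) + 1) * b 0 * π (n + 1) = 0)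
    (heqtail : ∀ n : ℕ, c ≤ n →
      hh n * π 0 + (∑ k ∈ Finset.Icc 1 (n - 1), b (n - k + 1) * π k) +
        (b 1 - ((c : ℝ) - 1) * b 0 - β) * π n + (c : ℝ) * b 0 * π (n + 1) = 0)
    (uβ : ℝ) (huβ : uβ ∈ Set.Ioo (0 : ℝ) 1) (huβroot : Bi b c uβ = β * uβ) :
    β * (1 - π 0) =
        π 0 * ((∑' j : ℕ, hh (j + 1)) - Hgen hh uβ) +
          (∑ k ∈ Finset.Icc 1 (c - 1),
            π k * ((c : ℝ) - (k : ℝ)) * b 0 * uβ ^ (k - 1) * (1 - uβ)) ∧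
      (0 < π 0 →
        β = π 0 * (β + (∑' j : ℕ, hh (j + 1)) - Hgen hh uβ +
            ∑ k ∈ Finset.Icc 1 (c - 1),
              (π k / π 0) * ((c : ℝ) - (k : ℝ)) * b 0 * uβ ^ (k - 1) * (1 - uβ))) := by
  obtain ⟨hu0, hu1⟩ := huβ
  -- basic summability facts
  have hπ1s : Summable (fun m : ℕ => π (m + 1)) := (summable_nat_add_iff 1).2 hπsum
  have hS1 : Summable (fun m : ℕ => π (m + 1) * uβ ^ m) := by
    have := aux_summable hπsum hπnn hu0.le hu1.le (fun _ => 1) 1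
      (fun _ => zero_le_one) (fun _ => le_rfl)
    simpa using this
  have hSN1 : Summable (fun m : ℕ => ((min (m + 1) c : ℕ) : ℝ) * (π (m + 1) * uβ ^ m)) :=
    aux_summable hπsum hπnn hu0.le hu1.le _ (c : ℝ)
      (fun m => Nat.cast_nonneg _) (fun m => by exact_mod_cast min_le_right _ _)
  have hSR : Summable (fun m : ℕ => ((c - (m + 1) : ℕ) : ℝ) * (π (m + 1) * uβ ^ m)) :=
    aux_summable hπsum hπnn hu0.le hu1.le _ (c : ℝ)
      (fun m => Nat.cast_nonneg _) (fun m => by exact_mod_cast Nat.sub_le _ _)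
  have hSg : Summable (fun j : ℕ => b (j + 2) * uβ ^ (j + 2)) := by
    refine Summable.of_nonneg_of_le
      (fun j => mul_nonneg (hbnn _ (by omega)) (pow_nonneg hu0.le _))
      (fun j => ?_) ((summable_nat_add_iff 2).2 hbsum)
    calc b (j + 2) * uβ ^ (j + 2) ≤ b (j + 2) * 1 :=
          mul_le_mul_of_nonneg_left (pow_le_one₀ hu0.le hu1.le) (hbnn _ (by omega))
      _ = b (j + 2) := mul_one _
  have hShu : Summable (fun m : ℕ => hh (m + 1) * uβ ^ (m + 1)) := by
    refine Summable.of_nonneg_of_le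
      (fun m => mul_nonneg (hhnn _) (pow_nonneg hu0.le _)) (fun m => ?_) hhsum
    calc hh (m + 1) * uβ ^ (m + 1) ≤ hh (m + 1) * 1 :=
          mul_le_mul_of_nonneg_left (pow_le_one₀ hu0.le hu1.le) (hhnn _)
      _ = hh (m + 1) := mul_one _
  have hS2 : Summable (fun m : ℕ => π (m + 1) * uβ ^ (m + 1)) := by
    refine (hS1.mul_left uβ).congr (fun m => ?_)
    ring
  -- main abbreviations
  set P : ℝ := ∑' m : ℕ, π (m + 1) * uβ ^ m with hPdef
  set Q : ℝ := ∑' j : ℕ, b (j + 2) * uβ ^ (j + 2) with hQdef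
  set N1 : ℝ := ∑' m : ℕ, ((min (m + 1) c : ℕ) : ℝ) * (π (m + 1) * uβ ^ m) with hN1def
  set R : ℝ := ∑' m : ℕ, ((c - (m + 1) : ℕ) : ℝ) * (π (m + 1) * uβ ^ m) with hRdef
  -- N1 = c * P - R
  have hN1eq : N1 = (c : ℝ) * P - R := by
    have hterm : ∀ m : ℕ, ((min (m + 1) c : ℕ) : ℝ) * (π (m + 1) * uβ ^ m)
        = (c : ℝ) * (π (m + 1) * uβ ^ m) - ((c - (m + 1) : ℕ) : ℝ) * (π (m + 1) * uβ ^ m) := by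
      intro m
      have h1 : (min (m + 1) c) + (c - (m + 1)) = c := by omega
      have h2 : ((min (m + 1) c : ℕ) : ℝ) + ((c - (m + 1) : ℕ) : ℝ) = (c : ℝ) := by
        exact_mod_cast congrArg (Nat.cast : ℕ → ℝ) h1
      linear_combination (π (m + 1) * uβ ^ m) * h2
    rw [hN1def, tsum_congr hterm, Summable.tsum_sub (hS1.mul_left _) hSR, tsum_mul_left]
  -- R is a finite sum
  have hRfin : R = ∑ m ∈ Finset.range (c - 1),
      ((c - (m + 1) : ℕ) : ℝ) * (π (m + 1) * uβ ^ m) := by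
    refine tsum_eq_sum (fun m hm => ?_)
    have : c - (m + 1) = 0 := by
      simp only [Finset.mem_range, not_lt] at hm; omega
    simp [this]
  -- the boundary sum equals b0 (1-u) R
  have hS : (∑ k ∈ Finset.Icc 1 (c - 1),
      π k * ((c : ℝ) - (k : ℝ)) * b 0 * uβ ^ (k - 1) * (1 - uβ)) = b 0 * (1 - uβ) * R := by
    rw [hRfin, Finset.mul_sum]
    have hIcc : Finset.Icc 1 (c - 1) = Finset.Ico 1 c := by
      rw [← Finset.Ico_add_one_right_eq_Icc]
      congr 1
      omega
    rw [hIcc, Finset.sum_Ico_eq_sum_range]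
    refine Finset.sum_congr rfl (fun i hi => ?_)
    have hi' : i < c - 1 := by simpa using hi
    have h1 : (1 + i) - 1 = i := by omega
    have h2 : ((c - (i + 1) : ℕ) : ℝ) = (c : ℝ) - ((1 + i : ℕ) : ℝ) := by
      have : (c : ℝ) - ((i + 1 : ℕ) : ℝ) = ((c - (i + 1) : ℕ) : ℝ) := by
        rw [Nat.cast_sub (by omega)]
      push_cast at this ⊢
      linarith
    rw [h1, h2]
    push_cast
    ring
  -- Cauchy product for the convolution part
  have hfnorm : Summable (fun k : ℕ => ‖π (k + 1) * uβ ^ k‖) := by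
    refine hS1.congr (fun k => ?_)
    rw [Real.norm_eq_abs, abs_of_nonneg (mul_nonneg (hπnn _) (pow_nonneg hu0.le _))]
  have hgnorm : Summable (fun j : ℕ => ‖b (j + 2) * uβ ^ (j + 2)‖) := by
    refine hSg.congr (fun j => ?_)
    rw [Real.norm_eq_abs,
      abs_of_nonneg (mul_nonneg (hbnn _ (by omega)) (pow_nonneg hu0.le _))]
  have hcauchy : P * Q = ∑' n : ℕ, ∑ k ∈ Finset.range (n + 1),
      (π (k + 1) * uβ ^ k) * (b ((n - k) + 2) * uβ ^ ((n - k) + 2)) :=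
    tsum_mul_tsum_eq_tsum_sum_range_of_summable_norm hfnorm hgnorm
  have hCPsum : Summable (fun n : ℕ => ∑ k ∈ Finset.range (n + 1),
      (π (k + 1) * uβ ^ k) * (b ((n - k) + 2) * uβ ^ ((n - k) + 2))) :=
    (summable_norm_sum_mul_range_of_summable_norm hfnorm hgnorm).of_norm
  -- the convolution terms
  set Bfun : ℕ → ℝ := fun m => (∑ k ∈ Finset.Icc 1 m, b (m + 1 - k + 1) * π k) * uβ ^ (m + 1)
    with hBfundef
  have hBB : ∀ n : ℕ, Bfun (n + 1) = ∑ k ∈ Finset.range (n + 1),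
      (π (k + 1) * uβ ^ k) * (b ((n - k) + 2) * uβ ^ ((n - k) + 2)) := by
    intro n
    rw [hBfundef]
    simp only
    rw [show Finset.Icc 1 (n + 1) = Finset.Ico 1 (n + 2) from (Finset.Ico_add_one_right_eq_Icc 1 (n+1)).symm,
      Finset.sum_Ico_eq_sum_range, Finset.sum_mul]
    have : n + 2 - 1 = n + 1 := by omega
    rw [this]
    refine Finset.sum_congr rfl (fun i hi => ?_)
    have hi' : i < n + 1 := by simpa using hi
    have h1 : n + 1 + 1 - (1 + i) + 1 = (n - i) + 2 := by omega
    have h2 : i + ((n - i) + 2) = n + 2 := by omega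
    rw [h1]
    have h3 : uβ ^ i * uβ ^ ((n - i) + 2) = uβ ^ (n + 2) := by
      rw [← pow_add, h2]
    calc b ((n - i) + 2) * π (1 + i) * uβ ^ (n + 1 + 1)
        = π (1 + i) * (b ((n - i) + 2) * uβ ^ (n + 2)) := by ring
      _ = π (i + 1) * (b ((n - i) + 2) * (uβ ^ i * uβ ^ ((n - i) + 2))) := by
          rw [h3, Nat.add_comm 1 i]
      _ = (π (i + 1) * uβ ^ i) * (b ((n - i) + 2) * uβ ^ ((n - i) + 2)) := by ring
  have hBfun0 : Bfun 0 = 0 := by simp [hBfundef]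
  have hBsummable : Summable Bfun := by
    refine (summable_nat_add_iff 1).1 (hCPsum.congr (fun n => (hBB n).symm))
  have hBtsum : ∑' m : ℕ, Bfun m = P * Q := by
    rw [Summable.tsum_eq_zero_add hBsummable, hBfun0, zero_add, tsum_congr hBB, ← hcauchy]
  -- other summands
  set Afun : ℕ → ℝ := fun m => π 0 * (hh (m + 1) * uβ ^ (m + 1)) with hAfundef
  have hAsummable : Summable Afun := hShu.mul_left _
  have hAtsum : ∑' m : ℕ, Afun m = π 0 * Hgen hh uβ := by
    rw [hAfundef, tsum_mul_left]; rfl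
  set C1fun : ℕ → ℝ := fun m => (b 1 - β) * (π (m + 1) * uβ ^ (m + 1)) with hC1fundef
  have hC1summable : Summable C1fun := hS2.mul_left _
  have htsum_shift : ∑' m : ℕ, π (m + 1) * uβ ^ (m + 1) = uβ * P := by
    rw [show (fun m : ℕ => π (m + 1) * uβ ^ (m + 1))
        = fun m : ℕ => uβ * (π (m + 1) * uβ ^ m) from funext (fun m => by ring),
      tsum_mul_left]
  have hC1tsum : ∑' m : ℕ, C1fun m = (b 1 - β) * (uβ * P) := by
    rw [hC1fundef, tsum_mul_left, htsum_shift]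
  set C2fun : ℕ → ℝ := fun m =>
    (b 0 * uβ) * ((((min (m + 1) c : ℕ) : ℝ) - 1) * (π (m + 1) * uβ ^ m)) with hC2fundef
  have hSmin1 : Summable (fun m : ℕ =>
      (((min (m + 1) c : ℕ) : ℝ) - 1) * (π (m + 1) * uβ ^ m)) := by
    refine (hSN1.sub hS1).congr (fun m => ?_)
    ring
  have hC2summable : Summable C2fun := hSmin1.mul_left _
  have hC2tsum : ∑' m : ℕ, C2fun m = (b 0 * uβ) * (N1 - P) := by
    rw [hC2fundef, tsum_mul_left]
    congr 1
    rw [show (fun m : ℕ => (((min (m + 1) c : ℕ) : ℝ) - 1) * (π (m + 1) * uβ ^ m))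
        = fun m : ℕ => ((min (m + 1) c : ℕ) : ℝ) * (π (m + 1) * uβ ^ m)
            - π (m + 1) * uβ ^ m from funext (fun m => by ring),
      Summable.tsum_sub hSN1 hS1]
  set Wfun : ℕ → ℝ := fun m => ((min (m + 1) c : ℕ) : ℝ) * (π (m + 1) * uβ ^ m) with hWfundef
  set Dfun : ℕ → ℝ := fun m => b 0 * Wfun (m + 1) with hDfundef
  have hWsummable : Summable Wfun := hSN1
  have hDsummable : Summable Dfun := ((summable_nat_add_iff 1).2 hWsummable).mul_left _
  have hW0 : Wfun 0 = π 1 := by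
    rw [hWfundef]
    simp [Nat.min_eq_left hc]
  have hDtsum : ∑' m : ℕ, Dfun m = b 0 * (N1 - π 1) := by
    have := Summable.tsum_eq_zero_add hWsummable
    rw [hDfundef, tsum_mul_left]
    congr 1
    rw [← hN1def] at this
    rw [hW0] at this
    linarith
  -- each term of the master series vanishes
  have hkey : ∀ m : ℕ, Afun m + Bfun m + C1fun m - C2fun m + Dfun m = 0 := by
    intro m
    have heqn : hh (m + 1) * π 0 + (∑ k ∈ Finset.Icc 1 m, b (m + 1 - k + 1) * π k) +
        (b 1 - (((min (m + 1) c : ℕ) : ℝ) - 1) * b 0 - β) * π (m + 1) +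
        ((min (m + 2) c : ℕ) : ℝ) * b 0 * π (m + 2) = 0 := by
      rcases lt_or_ge (m + 1) c with hlt | hge
      · have h1 : min (m + 1) c = m + 1 := by omega
        have h2 : min (m + 2) c = m + 2 := by omega
        have := heqmid (m + 1) (by omega) (by omega)
        rw [Nat.add_sub_cancel] at this
        rw [h1, h2]
        push_cast
        push_cast at this
        linarith
      · have h1 : min (m + 1) c = c := by omega
        have h2 : min (m + 2) c = c := by omega
        have := heqtail (m + 1) hge
        rw [Nat.add_sub_cancel] at this
        rw [h1, h2]
        linarith
    have hD : Dfun m = ((min (m + 2) c : ℕ) : ℝ) * b 0 * (π (m + 2) * uβ ^ (m + 1)) := by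
      simp only [hDfundef, hWfundef]
      have : m + 1 + 1 = m + 2 := rfl
      rw [this]; ring
    simp only [hAfundef, hBfundef, hC1fundef, hC2fundef]
    rw [hD]
    linear_combination uβ ^ (m + 1) * heqn
  -- sum the master series
  have hmaster : 0 = (π 0 * Hgen hh uβ) + P * Q + (b 1 - β) * (uβ * P)
      - (b 0 * uβ) * (N1 - P) + b 0 * (N1 - π 1) := by
    have hz : ∑' m : ℕ, (Afun m + Bfun m + C1fun m - C2fun m + Dfun m) = 0 := by
      rw [tsum_congr hkey]; exact tsum_zero
    rw [← hAtsum, ← hBtsum, ← hC1tsum, ← hC2tsum, ← hDtsum, ← hz]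
    rw [Summable.tsum_add (((hAsummable.add hBsummable).add hC1summable).sub hC2summable) hDsummable,
      Summable.tsum_sub ((hAsummable.add hBsummable).add hC1summable) hC2summable,
      Summable.tsum_add (hAsummable.add hBsummable) hC1summable,
      Summable.tsum_add hAsummable hBsummable]
  -- the root equation
  have hbu : Summable (fun j : ℕ => b j * uβ ^ j) := by
    refine Summable.of_norm_bounded (g := fun j => |b j|) hbsum.abs (fun j => ?_)
    rw [Real.norm_eq_abs, abs_mul, abs_pow, abs_of_pos hu0]
    calc |b j| * uβ ^ j ≤ |b j| * 1 :=
          mul_le_mul_of_nonneg_left (pow_le_one₀ hu0.le hu1.le) (abs_nonneg _)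
      _ = |b j| := mul_one _
  have hBu0 : (∑' j : ℕ, b j * uβ ^ j) = b 0 + (b 1 * uβ + Q) := by
    rw [Summable.tsum_eq_zero_add hbu]
    congr 1
    · simp
    rw [Summable.tsum_eq_zero_add ((summable_nat_add_iff 1).2 hbu)]
    congr 1
    · simp
  have hPco : Q + (b 1 - β) * uβ + b 0 * uβ + b 0 * (c : ℝ) * (1 - uβ) = 0 := by
    have hroot := huβroot
    rw [Bi, hBu0] at hroot
    linear_combination hroot
  -- first part
  have hpart1 : β * (1 - π 0) =
      π 0 * ((∑' j : ℕ, hh (j + 1)) - Hgen hh uβ) +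
        (∑ k ∈ Finset.Icc 1 (c - 1),
          π k * ((c : ℝ) - (k : ℝ)) * b 0 * uβ ^ (k - 1) * (1 - uβ)) := by
    rw [hS]
    have hPzero : P * (Q + (b 1 - β) * uβ + b 0 * uβ + b 0 * (c : ℝ) * (1 - uβ)) = 0 := by
      rw [hPco]; ring
    linear_combination (-1 : ℝ) * hmaster + heq0 - hPzero - (b 0 * (1 - uβ)) * hN1eq
  refine ⟨hpart1, fun hπ0pos => ?_⟩
  have hne : π 0 ≠ 0 := ne_of_gt hπ0pos
  have hdiv : π 0 * (∑ k ∈ Finset.Icc 1 (c - 1),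
      (π k / π 0) * ((c : ℝ) - (k : ℝ)) * b 0 * uβ ^ (k - 1) * (1 - uβ))
      = ∑ k ∈ Finset.Icc 1 (c - 1),
        π k * ((c : ℝ) - (k : ℝ)) * b 0 * uβ ^ (k - 1) * (1 - uβ) := by
    rw [Finset.mul_sum]
    refine Finset.sum_congr rfl (fun k _ => ?_)
    field_simp
  linear_combination hpart1 - hdiv
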